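/- Let d > 6 be an integer. There exists a constant C = C(d) > 0 such that for every real α ∈ (0, 1/3) and every integer r ≥ 1, one has ∑_{x ∈ B_{αr}} ∑_{u ∈ B_{αr}} ∑_{v ∈ B_r} |u − x|^{2−d} |x − v|^{2−d} |v − u|^{2−d} |x|^{2−d} · max(r − |v|, 1)^{−2} ≤ C α², where terms in which any of u − x, x − v, v − u, x vanishes are omitted from the sum. -/

import Mathlib

open scoped ENNReal

/-- The power `|x|^a` (ℓ^∞ norm of a lattice point, real exponent), valued in `[0,∞]`,
with the convention that the term is omitted (set to `0`) when the base vanishes. -/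
noncomputable def latPow {d : ℕ} (x : Fin d → ℤ) (a : ℝ) : ℝ≥0∞ :=
  if x = 0 then 0 else ENNReal.ofReal (‖x‖ ^ a)

variable {d : ℕ}

def natNorm (w : Fin d → ℤ) : ℕ := Finset.univ.sup fun i => (w i).natAbs

lemma cast_natAbs_eq (k : ℤ) : ((k.natAbs : ℝ)) = |(k : ℝ)| := by
  rw [Nat.cast_natAbs, Int.cast_abs]

lemma natNorm_eq_zero_iff {w : Fin d → ℤ} : natNorm w = 0 ↔ w = 0 := by
  simp [natNorm, Finset.sup_eq_bot_iff, funext_iff, Int.natAbs_eq_zero]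

lemma norm_eq_natNorm (hd : 0 < d) (w : Fin d → ℤ) : ‖w‖ = (natNorm w : ℝ) := by
  apply le_antisymm
  · apply pi_norm_le_iff_of_nonneg (by positivity) |>.2
    intro i
    rw [Int.norm_eq_abs]
    have h : (w i).natAbs ≤ natNorm w := Finset.le_sup (f := fun i => (w i).natAbs) (Finset.mem_univ i)
    calc |(w i : ℝ)| = ((w i).natAbs : ℝ) := (cast_natAbs_eq _).symm
      _ ≤ _ := by exact_mod_cast h
  · obtain ⟨i, -, hi⟩ := Finset.exists_mem_eq_sup Finset.univ
      (Finset.univ_nonempty_iff.2 ⟨⟨0, hd⟩⟩) (fun i => (w i).natAbs)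
    calc (natNorm w : ℝ) = |(w i : ℝ)| := by rw [natNorm, hi, cast_natAbs_eq]
      _ = ‖w i‖ := (Int.norm_eq_abs _).symm
      _ ≤ ‖w‖ := norm_le_pi_norm w i

noncomputable def boxF (d N : ℕ) : Finset (Fin d → ℤ) := Fintype.piFinset fun _ => Finset.Icc (-(N:ℤ)) N

lemma mem_boxF {N : ℕ} {w : Fin d → ℤ} : w ∈ boxF d N ↔ natNorm w ≤ N := by
  simp only [boxF, Fintype.mem_piFinset, Finset.mem_Icc, natNorm, Finset.sup_le_iff,
    Finset.mem_univ, forall_true_left]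
  constructor <;> intro h i <;> have := h i <;> omega

lemma shell_card (hd : 0 < d) (N n : ℕ) (hn : 1 ≤ n) :
    ((boxF d N).filter (fun w => natNorm w = n)).card ≤ 2 * d * (2 * n + 1) ^ (d - 1) := by
  classical
  have hsub : (boxF d N).filter (fun w => natNorm w = n) ⊆
      Finset.univ.biUnion (fun i : Fin d =>
        Fintype.piFinset fun j => if j = i then ({(n : ℤ), -(n : ℤ)} : Finset ℤ)
          else Finset.Icc (-(n : ℤ)) n) := by
    intro w hw
    rw [Finset.mem_filter] at hw
    obtain ⟨-, hwn⟩ := hw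
    obtain ⟨i, -, hi⟩ := Finset.exists_mem_eq_sup Finset.univ
      (Finset.univ_nonempty_iff.2 ⟨⟨0, hd⟩⟩) (fun i => (w i).natAbs)
    rw [Finset.mem_biUnion]
    refine ⟨i, Finset.mem_univ i, ?_⟩
    rw [Fintype.mem_piFinset]
    intro j
    by_cases hj : j = i
    · subst hj
      have : (w j).natAbs = n := by rw [natNorm, hi] at hwn; omega
      rcases Int.natAbs_eq_iff.1 this with h | h <;> simp [h]
    · have hle : (w j).natAbs ≤ n := by
        have := Finset.le_sup (f := fun i => (w i).natAbs) (Finset.mem_univ j)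
        rw [← natNorm, hwn] at this; exact this
      simp only [hj, if_false, Finset.mem_Icc]
      omega
  calc ((boxF d N).filter (fun w => natNorm w = n)).card
      ≤ _ := Finset.card_le_card hsub
    _ ≤ ∑ i : Fin d, (Fintype.piFinset fun j => if j = i then ({(n : ℤ), -(n : ℤ)} : Finset ℤ)
          else Finset.Icc (-(n : ℤ)) n).card := Finset.card_biUnion_le
    _ ≤ ∑ _i : Fin d, 2 * (2 * n + 1) ^ (d - 1) := by
        apply Finset.sum_le_sum
        intro i _
        rw [Fintype.card_piFinset]
        rw [← Finset.mul_prod_erase Finset.univ _ (Finset.mem_univ i)]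
        have h1 : (if i = i then ({(n : ℤ), -(n : ℤ)} : Finset ℤ)
            else Finset.Icc (-(n : ℤ)) n).card ≤ 2 := by
          simp only [if_pos rfl]
          exact Finset.card_insert_le _ _ |>.trans (by simp)
        have h2 : ∀ j ∈ Finset.univ.erase i,
            (if j = i then ({(n : ℤ), -(n : ℤ)} : Finset ℤ)
            else Finset.Icc (-(n : ℤ)) n).card = 2 * n + 1 := by
          intro j hj
          rw [if_neg (Finset.mem_erase.1 hj).1, Int.card_Icc]
          omega
        rw [Finset.prod_congr rfl h2, Finset.prod_const,
          Finset.card_erase_of_mem (Finset.mem_univ i), Finset.card_univ, Fintype.card_fin]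
        exact Nat.mul_le_mul_right _ h1
    _ = 2 * d * (2 * n + 1) ^ (d - 1) := by
        rw [Finset.sum_const, Finset.card_univ, Fintype.card_fin]; ring

lemma box_sum (hd : 0 < d) (N : ℕ) (h : ℕ → ℝ≥0∞) :
    ∑ w ∈ boxF d N, (if w = 0 then 0 else h (natNorm w)) ≤
      ∑ n ∈ Finset.Icc 1 N, (2 * d * (2 * n + 1) ^ (d - 1) : ℕ) * h n := by
  classical
  rw [← Finset.sum_fiberwise_of_maps_to (g := natNorm) (t := Finset.Icc 0 N)
    (fun w hw => by simp [Finset.mem_Icc]; exact mem_boxF.1 hw)]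
  have h0 : Finset.Icc 0 N = insert 0 (Finset.Icc 1 N) := by
    ext m; simp [Finset.mem_Icc, Finset.mem_insert]; omega
  rw [h0, Finset.sum_insert (by simp)]
  have hzero : ∑ w ∈ (boxF d N).filter (fun w => natNorm w = 0),
      (if w = 0 then 0 else h (natNorm w)) = 0 := by
    apply Finset.sum_eq_zero
    intro w hw
    rw [Finset.mem_filter] at hw
    rw [if_pos (natNorm_eq_zero_iff.1 hw.2)]
  rw [hzero, zero_add]
  apply Finset.sum_le_sum
  intro n hn
  rw [Finset.mem_Icc] at hn
  calc ∑ w ∈ (boxF d N).filter (fun w => natNorm w = n),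
        (if w = 0 then 0 else h (natNorm w))
      ≤ ∑ _w ∈ (boxF d N).filter (fun w => natNorm w = n), h n := by
        apply Finset.sum_le_sum
        intro w hw
        rw [Finset.mem_filter] at hw
        split
        · exact zero_le
        · rw [hw.2]
    _ = ((boxF d N).filter (fun w => natNorm w = n)).card * h n := by
        rw [Finset.sum_const, nsmul_eq_mul]
    _ ≤ _ := by
        apply mul_le_mul_left
        exact_mod_cast Nat.cast_le.2 (shell_card hd N n hn.1)

noncomputable def Kc2 : ℝ≥0∞ := ∑' s : ℕ, ENNReal.ofReal ((max (s : ℝ) 1) ^ (-2 : ℝ))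
noncomputable def Kc32 : ℝ≥0∞ := ∑' n : ℕ, ENNReal.ofReal ((n : ℝ) ^ (-(3 : ℝ) / 2))

lemma Kc2_ne_top : Kc2 ≠ ⊤ := by
  have hs : Summable (fun s : ℕ => (max (s : ℝ) 1) ^ (-2 : ℝ)) := by
    rw [← summable_nat_add_iff 1]
    have h2 : Summable (fun n : ℕ => ((n : ℝ) ^ ((2 : ℝ)))⁻¹) := by
      rw [Real.summable_nat_rpow_inv]; norm_num
    rw [← summable_nat_add_iff 1] at h2
    apply h2.congr
    intro n
    rw [max_eq_left (by push_cast; linarith), Real.rpow_neg (by positivity)]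
  rw [Kc2, ← ENNReal.ofReal_tsum_of_nonneg (fun s => by positivity) hs]
  exact ENNReal.ofReal_ne_top

lemma Kc32_ne_top : Kc32 ≠ ⊤ := by
  have hs : Summable (fun n : ℕ => (n : ℝ) ^ (-(3 : ℝ) / 2)) := by
    have h2 : Summable (fun n : ℕ => ((n : ℝ) ^ ((3 : ℝ) / 2))⁻¹) := by
      rw [Real.summable_nat_rpow_inv]; norm_num
    apply h2.congr
    intro n
    rw [neg_div, Real.rpow_neg (by positivity)]
  rw [Kc32, ← ENNReal.ofReal_tsum_of_nonneg (fun s => by positivity) hs]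
  exact ENNReal.ofReal_ne_top

lemma latPow_le_ofReal {w : Fin d → ℤ} {b c : ℝ} (hb : b ≤ 0) (hc : 0 < c)
    (hcw : c ≤ ‖w‖) : latPow w b ≤ ENNReal.ofReal (c ^ b) := by
  have hw : w ≠ 0 := by
    rintro rfl; rw [norm_zero] at hcw; linarith
  rw [latPow, if_neg hw]
  exact ENNReal.ofReal_le_ofReal (Real.rpow_le_rpow_of_nonpos hc hcw hb)

lemma one_le_norm_of_ne {w : Fin d → ℤ} (hd : 0 < d) (hw : w ≠ 0) : 1 ≤ ‖w‖ := by
  rw [norm_eq_natNorm hd]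
  have : natNorm w ≠ 0 := fun h => hw (natNorm_eq_zero_iff.1 h)
  exact_mod_cast Nat.one_le_iff_ne_zero.2 this

lemma latPow_le_one {w : Fin d → ℤ} (hd : 0 < d) {b : ℝ} (hb : b ≤ 0) :
    latPow w b ≤ 1 := by
  by_cases hw : w = 0
  · simp [latPow, hw]
  · calc latPow w b ≤ ENNReal.ofReal ((1 : ℝ) ^ b) :=
        latPow_le_ofReal hb one_pos (one_le_norm_of_ne hd hw)
    _ = 1 := by rw [Real.one_rpow, ENNReal.ofReal_one]

lemma tsum_box_le (hd : 0 < d) {R : ℝ} (hR : 0 ≤ R) :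
    (∑' w : Fin d → ℤ, if ‖w‖ ≤ R then latPow w ((2 : ℝ) - d) else 0) ≤
      ENNReal.ofReal ((2 * d * 3 ^ (d - 1) : ℕ) * R ^ 2) := by
  classical
  set N := ⌊R⌋₊ with hN
  have hsupp : ∀ w : Fin d → ℤ, w ∉ boxF d N →
      (if ‖w‖ ≤ R then latPow w ((2 : ℝ) - d) else 0) = 0 := by
    intro w hw
    rw [if_neg]
    intro hle
    exact hw (mem_boxF.2 (Nat.le_floor (by rwa [← norm_eq_natNorm hd])))
  rw [tsum_eq_sum hsupp]
  have heq : ∀ w ∈ boxF d N, (if ‖w‖ ≤ R then latPow w ((2 : ℝ) - d) else 0)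
      = (if w = 0 then 0 else ENNReal.ofReal ((natNorm w : ℝ) ^ ((2 : ℝ) - d))) := by
    intro w hw
    have h1 : ‖w‖ ≤ R := by
      rw [norm_eq_natNorm hd]
      calc (natNorm w : ℝ) ≤ (N : ℝ) := by exact_mod_cast mem_boxF.1 hw
        _ ≤ R := Nat.floor_le hR
    rw [if_pos h1, latPow, norm_eq_natNorm hd]
  rw [Finset.sum_congr rfl heq]
  calc ∑ w ∈ boxF d N, (if w = 0 then 0 else ENNReal.ofReal ((natNorm w : ℝ) ^ ((2 : ℝ) - d)))
      ≤ ∑ n ∈ Finset.Icc 1 N, (2 * d * (2 * n + 1) ^ (d - 1) : ℕ) *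
          ENNReal.ofReal ((n : ℝ) ^ ((2 : ℝ) - d)) := box_sum hd N _
    _ ≤ ∑ n ∈ Finset.Icc 1 N, ENNReal.ofReal (((2 * d * 3 ^ (d - 1) : ℕ) : ℝ) * n) := by
        apply Finset.sum_le_sum
        intro n hn
        rw [Finset.mem_Icc] at hn
        have hn1 : (1 : ℝ) ≤ (n : ℝ) := by exact_mod_cast hn.1
        rw [← ENNReal.ofReal_natCast, ← ENNReal.ofReal_mul (by positivity)]
        apply ENNReal.ofReal_le_ofReal
        have h2 : ((2 * d * (2 * n + 1) ^ (d - 1) : ℕ) : ℝ) ≤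
            ((2 * d * 3 ^ (d - 1) : ℕ) : ℝ) * (n : ℝ) ^ (d - 1 : ℕ) := by
          have hnat : 2 * d * (2 * n + 1) ^ (d - 1) ≤ 2 * d * 3 ^ (d - 1) * n ^ (d - 1) := by
            have h := Nat.pow_le_pow_left (show 2 * n + 1 ≤ 3 * n by omega) (d - 1)
            calc 2 * d * (2 * n + 1) ^ (d - 1) ≤ 2 * d * (3 * n) ^ (d - 1) :=
                Nat.mul_le_mul_left _ h
              _ = 2 * d * 3 ^ (d - 1) * n ^ (d - 1) := by rw [Nat.mul_pow]; ring
          exact_mod_cast hnat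
        have h3 : ((n : ℝ) ^ (d - 1 : ℕ)) * (n : ℝ) ^ ((2 : ℝ) - d) = n := by
          rw [← Real.rpow_natCast (n : ℝ) (d - 1), ← Real.rpow_add (by linarith)]
          rw [Nat.cast_sub hd]
          norm_num
        calc ((2 * d * (2 * n + 1) ^ (d - 1) : ℕ) : ℝ) * (n : ℝ) ^ ((2 : ℝ) - d)
            ≤ (((2 * d * 3 ^ (d - 1) : ℕ) : ℝ) * (n : ℝ) ^ (d - 1 : ℕ)) *
              (n : ℝ) ^ ((2 : ℝ) - d) := by
              apply mul_le_mul_of_nonneg_right h2 (by positivity)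
          _ = ((2 * d * 3 ^ (d - 1) : ℕ) : ℝ) * n := by rw [mul_assoc, h3]
    _ = ENNReal.ofReal (∑ n ∈ Finset.Icc 1 N, ((2 * d * 3 ^ (d - 1) : ℕ) : ℝ) * n) :=
        (ENNReal.ofReal_sum_of_nonneg (fun n _ => by positivity)).symm
    _ ≤ ENNReal.ofReal ((2 * d * 3 ^ (d - 1) : ℕ) * R ^ 2) := by
        apply ENNReal.ofReal_le_ofReal
        rw [← Finset.mul_sum]
        apply mul_le_mul_of_nonneg_left _ (by positivity)
        have hsum : ∑ n ∈ Finset.Icc 1 N, (n : ℝ) ≤ (N : ℝ) * N := by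
          calc ∑ n ∈ Finset.Icc 1 N, (n : ℝ) ≤ (Finset.Icc 1 N).card • (N : ℝ) :=
              Finset.sum_le_card_nsmul _ _ _ (fun n hn => by
                exact_mod_cast (Finset.mem_Icc.1 hn).2)
            _ = (N : ℝ) * N := by rw [Nat.card_Icc, nsmul_eq_mul]; push_cast; ring
        have hNR : (N : ℝ) ≤ R := Nat.floor_le hR
        calc ∑ n ∈ Finset.Icc 1 N, (n : ℝ) ≤ (N : ℝ) * N := hsum
          _ ≤ R ^ 2 := by nlinarith [Nat.cast_nonneg (α := ℝ) N]

lemma tsum_all_le (hd : 0 < d) {b : ℝ} (hb : (d : ℝ) - 1 + b ≤ -(3 : ℝ) / 2) :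
    ∑' w : Fin d → ℤ, latPow w b ≤ (2 * d * 3 ^ (d - 1) : ℕ) * Kc32 := by
  classical
  rw [ENNReal.tsum_eq_iSup_sum]
  apply iSup_le
  intro s
  set N := s.sup natNorm with hNdef
  have hsub : s ⊆ boxF d N := fun w hw => mem_boxF.2 (Finset.le_sup hw)
  calc ∑ w ∈ s, latPow w b ≤ ∑ w ∈ boxF d N, latPow w b :=
      Finset.sum_le_sum_of_subset hsub
    _ = ∑ w ∈ boxF d N, (if w = 0 then 0 else ENNReal.ofReal ((natNorm w : ℝ) ^ b)) := by
        apply Finset.sum_congr rfl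
        intro w _
        rw [latPow, norm_eq_natNorm hd]
    _ ≤ ∑ n ∈ Finset.Icc 1 N, (2 * d * (2 * n + 1) ^ (d - 1) : ℕ) *
          ENNReal.ofReal ((n : ℝ) ^ b) := box_sum hd N _
    _ ≤ ∑ n ∈ Finset.Icc 1 N, (2 * d * 3 ^ (d - 1) : ℕ) *
          ENNReal.ofReal ((n : ℝ) ^ (-(3 : ℝ) / 2)) := by
        apply Finset.sum_le_sum
        intro n hn
        rw [Finset.mem_Icc] at hn
        have hn1 : (1 : ℝ) ≤ (n : ℝ) := by exact_mod_cast hn.1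
        have step1 : ((2 * d * (2 * n + 1) ^ (d - 1) : ℕ) : ℝ≥0∞) ≤
            (2 * d * 3 ^ (d - 1) : ℕ) * ((n ^ (d - 1) : ℕ) : ℝ≥0∞) := by
          rw [← Nat.cast_mul]
          apply Nat.cast_le.2
          have h := Nat.pow_le_pow_left (show 2 * n + 1 ≤ 3 * n by omega) (d - 1)
          calc 2 * d * (2 * n + 1) ^ (d - 1) ≤ 2 * d * (3 * n) ^ (d - 1) :=
              Nat.mul_le_mul_left _ h
            _ = 2 * d * 3 ^ (d - 1) * n ^ (d - 1) := by rw [Nat.mul_pow]; ring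
        calc (2 * d * (2 * n + 1) ^ (d - 1) : ℕ) * ENNReal.ofReal ((n : ℝ) ^ b)
            ≤ ((2 * d * 3 ^ (d - 1) : ℕ) * ((n ^ (d - 1) : ℕ) : ℝ≥0∞)) *
              ENNReal.ofReal ((n : ℝ) ^ b) := mul_le_mul_left step1 _
          _ = (2 * d * 3 ^ (d - 1) : ℕ) *
              (((n ^ (d - 1) : ℕ) : ℝ≥0∞) * ENNReal.ofReal ((n : ℝ) ^ b)) := by
              rw [mul_assoc]
          _ ≤ (2 * d * 3 ^ (d - 1) : ℕ) * ENNReal.ofReal ((n : ℝ) ^ (-(3 : ℝ) / 2)) := by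
              apply mul_le_mul_right
              rw [← ENNReal.ofReal_natCast, ← ENNReal.ofReal_mul (by positivity)]
              apply ENNReal.ofReal_le_ofReal
              have : ((n ^ (d - 1) : ℕ) : ℝ) * (n : ℝ) ^ b = (n : ℝ) ^ (((d : ℝ) - 1) + b) := by
                push_cast
                rw [← Real.rpow_natCast (n : ℝ) (d - 1), ← Real.rpow_add (by linarith),
                  Nat.cast_sub hd]
                norm_num
              rw [this]
              exact Real.rpow_le_rpow_of_exponent_le hn1 hb
    _ = (2 * d * 3 ^ (d - 1) : ℕ) *
          ∑ n ∈ Finset.Icc 1 N, ENNReal.ofReal ((n : ℝ) ^ (-(3 : ℝ) / 2)) := by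
        rw [Finset.mul_sum]
    _ ≤ (2 * d * 3 ^ (d - 1) : ℕ) * Kc32 := mul_le_mul_right (ENNReal.sum_le_tsum _) _

lemma tsum_g_le (hd : 0 < d) (r : ℕ) :
    (∑' v : Fin d → ℤ,
        if ‖v‖ ≤ (r : ℝ) then ENNReal.ofReal ((max ((r : ℝ) - ‖v‖) 1) ^ (-2 : ℝ)) else 0)
      ≤ 1 + (2 * d * 3 ^ (d - 1) * r ^ (d - 1) : ℕ) * Kc2 := by
  classical
  have hsupp : ∀ v : Fin d → ℤ, v ∉ boxF d r →
      (if ‖v‖ ≤ (r : ℝ) then ENNReal.ofReal ((max ((r : ℝ) - ‖v‖) 1) ^ (-2 : ℝ)) else 0) = 0 := by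
    intro v hv
    rw [if_neg]
    intro hle
    apply hv
    apply mem_boxF.2
    rw [norm_eq_natNorm hd] at hle
    exact_mod_cast hle
  rw [tsum_eq_sum hsupp]
  have heq : ∀ v ∈ boxF d r,
      (if ‖v‖ ≤ (r : ℝ) then ENNReal.ofReal ((max ((r : ℝ) - ‖v‖) 1) ^ (-2 : ℝ)) else 0) =
      (if v = 0 then ENNReal.ofReal ((max (r : ℝ) 1) ^ (-2 : ℝ)) else 0) +
      (if v = 0 then 0 else ENNReal.ofReal ((max ((r : ℝ) - natNorm v) 1) ^ (-2 : ℝ))) := by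
    intro v hv
    have hle : ‖v‖ ≤ (r : ℝ) := by
      rw [norm_eq_natNorm hd]
      exact_mod_cast mem_boxF.1 hv
    rw [if_pos hle, norm_eq_natNorm hd]
    by_cases h0 : v = 0
    · rw [if_pos h0, if_pos h0, add_zero, h0]
      simp [natNorm_eq_zero_iff.2 rfl]
    · rw [if_neg h0, if_neg h0, zero_add]
  rw [Finset.sum_congr rfl heq, Finset.sum_add_distrib]
  have hfirst : ∑ v ∈ boxF d r, (if v = 0 then ENNReal.ofReal ((max (r : ℝ) 1) ^ (-2 : ℝ)) else 0)
      ≤ 1 := by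
    rw [Finset.sum_ite_eq' (boxF d r) 0 (fun _ => ENNReal.ofReal ((max (r : ℝ) 1) ^ (-2 : ℝ)))]
    rw [if_pos (mem_boxF.2 (by simp [natNorm_eq_zero_iff.2 rfl]))]
    rw [← ENNReal.ofReal_one]
    apply ENNReal.ofReal_le_ofReal
    exact Real.rpow_le_one_of_one_le_of_nonpos (le_max_right _ _) (by norm_num)
  have hsecond : ∑ v ∈ boxF d r,
      (if v = 0 then 0 else ENNReal.ofReal ((max ((r : ℝ) - natNorm v) 1) ^ (-2 : ℝ)))
      ≤ (2 * d * 3 ^ (d - 1) * r ^ (d - 1) : ℕ) * Kc2 := by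
    calc ∑ v ∈ boxF d r,
        (if v = 0 then 0 else ENNReal.ofReal ((max ((r : ℝ) - natNorm v) 1) ^ (-2 : ℝ)))
        ≤ ∑ n ∈ Finset.Icc 1 r, (2 * d * (2 * n + 1) ^ (d - 1) : ℕ) *
            ENNReal.ofReal ((max ((r : ℝ) - n) 1) ^ (-2 : ℝ)) := box_sum hd r _
      _ ≤ ∑ n ∈ Finset.Icc 1 r, (2 * d * 3 ^ (d - 1) * r ^ (d - 1) : ℕ) *
            ENNReal.ofReal ((max ((r : ℝ) - n) 1) ^ (-2 : ℝ)) := by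
          apply Finset.sum_le_sum
          intro n hn
          rw [Finset.mem_Icc] at hn
          apply mul_le_mul_left
          apply Nat.cast_le.2
          have h := Nat.pow_le_pow_left (show 2 * n + 1 ≤ 3 * r by omega) (d - 1)
          calc 2 * d * (2 * n + 1) ^ (d - 1) ≤ 2 * d * (3 * r) ^ (d - 1) :=
              Nat.mul_le_mul_left _ h
            _ = 2 * d * 3 ^ (d - 1) * r ^ (d - 1) := by rw [Nat.mul_pow]; ring
      _ = (2 * d * 3 ^ (d - 1) * r ^ (d - 1) : ℕ) *
            ∑ n ∈ Finset.Icc 1 r, ENNReal.ofReal ((max ((r : ℝ) - n) 1) ^ (-2 : ℝ)) := by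
          rw [Finset.mul_sum]
      _ ≤ (2 * d * 3 ^ (d - 1) * r ^ (d - 1) : ℕ) * Kc2 := by
          apply mul_le_mul_right
          have hcongr : ∀ n ∈ Finset.Icc 1 r,
              ENNReal.ofReal ((max ((r : ℝ) - n) 1) ^ (-2 : ℝ)) =
              ENNReal.ofReal ((max (((r - n : ℕ) : ℝ)) 1) ^ (-2 : ℝ)) := by
            intro n hn
            rw [Finset.mem_Icc] at hn
            rw [Nat.cast_sub hn.2]
          rw [Finset.sum_congr rfl hcongr,
            ← Finset.sum_image (f := fun s : ℕ => ENNReal.ofReal ((max ((s : ℕ) : ℝ) 1) ^ (-2 : ℝ)))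
              (g := fun n => r - n) (by intro a ha b hb hab
                                        rw [Finset.mem_coe, Finset.mem_Icc] at ha hb
                                        simp only at hab; omega)]
          exact ENNReal.sum_le_tsum _
  calc _ ≤ 1 + (2 * d * 3 ^ (d - 1) * r ^ (d - 1) : ℕ) * Kc2 := add_le_add hfirst hsecond

lemma triple_key {a b c : ℝ} (ha : 0 ≤ a) (hb : 0 ≤ b) (hc : 0 ≤ c)
    (h1 : c ≤ a) (h2 : c ≤ b) : a * b * c ≤ (a * b) ^ ((3 : ℝ) / 2) := by
  by_cases hab : a * b = 0
  · have hc0 : c = 0 := by rcases mul_eq_zero.1 hab with h | h <;> linarith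
    rw [hc0, mul_zero]
    positivity
  · have hab' : 0 < a * b := lt_of_le_of_ne (by positivity) (Ne.symm hab)
    have hcs : c ≤ Real.sqrt (a * b) := by
      rw [show c = Real.sqrt (c ^ 2) from (Real.sqrt_sq hc).symm]
      apply Real.sqrt_le_sqrt
      nlinarith
    calc a * b * c ≤ a * b * Real.sqrt (a * b) :=
        mul_le_mul_of_nonneg_left hcs (by positivity)
      _ = (a * b) ^ ((3 : ℝ) / 2) := by
        rw [show (3 : ℝ) / 2 = 1 + 1 / 2 by norm_num, Real.rpow_add hab', Real.rpow_one,
          Real.sqrt_eq_rpow]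

lemma triple_real {s t v : ℝ} (hs : 0 ≤ s) (ht : 0 ≤ t) (hv : 0 ≤ v) :
    s * t * v ≤ (s * t) ^ ((3 : ℝ) / 2) + (t * v) ^ ((3 : ℝ) / 2) + (s * v) ^ ((3 : ℝ) / 2) := by
  have P1 : (0 : ℝ) ≤ (s * t) ^ ((3 : ℝ) / 2) := by positivity
  have P2 : (0 : ℝ) ≤ (t * v) ^ ((3 : ℝ) / 2) := by positivity
  have P3 : (0 : ℝ) ≤ (s * v) ^ ((3 : ℝ) / 2) := by positivity
  rcases le_total s t with h1 | h1 <;> rcases le_total t v with h2 | h2 <;>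
    rcases le_total s v with h3 | h3
  · have e : s * t * v = t * v * s := by ring
    have k := triple_key ht hv hs h1 h3; linarith
  · have h3' : s ≤ v := le_trans h1 h2
    have e : s * t * v = t * v * s := by ring
    have k := triple_key ht hv hs h1 h3'; linarith
  · have e : s * t * v = t * v * s := by ring
    have k := triple_key ht hv hs h1 h3; linarith
  · have k := triple_key hs ht hv h3 h2; linarith
  · have e : s * t * v = s * v * t := by ring
    have k := triple_key hs hv ht h1 h2; linarith
  · have e : s * t * v = s * v * t := by ring
    have k := triple_key hs hv ht h1 h2; linarith
  · have h3' : v ≤ s := le_trans h2 h1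
    have k := triple_key hs ht hv h3' h2; linarith
  · have k := triple_key hs ht hv h3 h2; linarith

lemma latPow_triple (b : ℝ) (w z y : Fin d → ℤ) :
    latPow w b * latPow z b * latPow y b ≤
      latPow w (b * (3 / 2)) * latPow z (b * (3 / 2)) +
      latPow z (b * (3 / 2)) * latPow y (b * (3 / 2)) +
      latPow w (b * (3 / 2)) * latPow y (b * (3 / 2)) := by
  by_cases hw : w = 0
  · simp [latPow, hw]
  by_cases hz : z = 0
  · simp [latPow, hz]
  by_cases hy : y = 0
  · simp [latPow, hy]
  simp only [latPow, if_neg hw, if_neg hz, if_neg hy]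
  have hws : (0 : ℝ) ≤ ‖w‖ ^ b := Real.rpow_nonneg (norm_nonneg _) _
  have hzs : (0 : ℝ) ≤ ‖z‖ ^ b := Real.rpow_nonneg (norm_nonneg _) _
  have hys : (0 : ℝ) ≤ ‖y‖ ^ b := Real.rpow_nonneg (norm_nonneg _) _
  have key : ∀ p q : Fin d → ℤ,
      ENNReal.ofReal (‖p‖ ^ (b * (3 / 2))) * ENNReal.ofReal (‖q‖ ^ (b * (3 / 2))) =
      ENNReal.ofReal ((‖p‖ ^ b * ‖q‖ ^ b) ^ ((3 : ℝ) / 2)) := by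
    intro p q
    rw [← ENNReal.ofReal_mul (Real.rpow_nonneg (norm_nonneg _) _)]
    congr 1
    rw [Real.mul_rpow (Real.rpow_nonneg (norm_nonneg _) _) (Real.rpow_nonneg (norm_nonneg _) _),
      ← Real.rpow_mul (norm_nonneg _), ← Real.rpow_mul (norm_nonneg _)]
  rw [key, key, key, ← ENNReal.ofReal_mul hws, ← ENNReal.ofReal_mul (by positivity),
    ← ENNReal.ofReal_add (by positivity) (by positivity),
    ← ENNReal.ofReal_add (by positivity) (by positivity)]
  exact ENNReal.ofReal_le_ofReal (triple_real hws hzs hys)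

lemma tsum_val_le {β : Type*} (p : β → Prop) (f : β → ℝ≥0∞) :
    ∑' x : {y // p y}, f x.1 ≤ ∑' y, f y :=
  ENNReal.tsum_comp_le_tsum_of_injective Subtype.val_injective f

lemma tsum_shift_sub {α : Type*} [AddCommGroup α] (f : α → ℝ≥0∞) (z : α) :
    ∑' w, f (w - z) = ∑' w, f w := (Equiv.subRight z).tsum_eq f

lemma tsum_shift_subl {α : Type*} [AddCommGroup α] (f : α → ℝ≥0∞) (z : α) :
    ∑' w, f (z - w) = ∑' w, f w := (Equiv.subLeft z).tsum_eq f

lemma real_bdry (d : ℕ) (hd : 6 < d) (K cd : ℝ) (hK : 0 ≤ K) (hcd : 0 ≤ cd) (α R : ℝ)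
    (hα0 : 0 < α) (hα : α ≤ 1) (hR : 1 ≤ R) :
    ((R / 3) ^ ((2 : ℝ) - d)) ^ 2 * (1 + cd * R ^ (d - 1) * K) * (cd * (2 * (α * R)) ^ 2) *
      (cd * (α * R) ^ 2) ≤ (4 * cd ^ 2 * 9 ^ (d - 2) * (1 + cd * K)) * α ^ 2 := by
  have hR0 : (0 : ℝ) < R := by linarith
  have hd2 : 2 ≤ d := by omega
  have hd1 : 1 ≤ d := by omega
  have e1 : (R / 3) ^ ((2 : ℝ) - d) = R ^ ((2 : ℝ) - d) * (3 : ℝ) ^ (d - 2 : ℕ) := by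
    rw [Real.div_rpow hR0.le (by norm_num), show (2 : ℝ) - (d : ℝ) = -((d : ℝ) - 2) by ring,
      Real.rpow_neg (by norm_num : (0:ℝ) ≤ 3), div_eq_mul_inv, inv_inv,
      ← Real.rpow_natCast (3 : ℝ) (d - 2)]
    congr 2
    push_cast [Nat.cast_sub hd2]
    ring
  have e9 : ((3 : ℝ) ^ (d - 2 : ℕ)) ^ 2 = 9 ^ (d - 2 : ℕ) := by
    rw [← pow_mul, mul_comm, pow_mul]
    norm_num
  set Q : ℝ := (R ^ ((2 : ℝ) - d)) ^ 2 * R ^ (d - 1 : ℕ) * R ^ (4 : ℕ) with hQ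
  have hQeq : Q = R ^ ((7 : ℝ) - d) := by
    rw [hQ, ← Real.rpow_natCast R (d - 1), ← Real.rpow_natCast R 4,
      ← Real.rpow_natCast (R ^ ((2 : ℝ) - d)) 2, ← Real.rpow_mul hR0.le,
      ← Real.rpow_add hR0, ← Real.rpow_add hR0]
    congr 1
    push_cast [Nat.cast_sub hd1]
    ring
  have hQ1 : Q ≤ 1 := by
    rw [hQeq]
    apply Real.rpow_le_one_of_one_le_of_nonpos hR
    have : (7 : ℝ) ≤ d := by exact_mod_cast hd
    linarith
  have hQ0 : 0 ≤ Q := by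
    rw [hQeq]; positivity
  have hmid : (1 + cd * R ^ (d - 1) * K) ≤ R ^ (d - 1 : ℕ) * (1 + cd * K) := by
    have h1R : (1 : ℝ) ≤ R ^ (d - 1 : ℕ) := one_le_pow₀ hR
    nlinarith [mul_nonneg hcd hK]
  have hcdK : (0 : ℝ) ≤ 1 + cd * K := by nlinarith
  have h9 : (0 : ℝ) ≤ (9 : ℝ) ^ (d - 2 : ℕ) := by positivity
  calc ((R / 3) ^ ((2 : ℝ) - d)) ^ 2 * (1 + cd * R ^ (d - 1) * K) * (cd * (2 * (α * R)) ^ 2) *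
        (cd * (α * R) ^ 2)
      = (R ^ ((2 : ℝ) - d)) ^ 2 * 9 ^ (d - 2 : ℕ) * (1 + cd * R ^ (d - 1) * K) *
        (cd * (2 * (α * R)) ^ 2) * (cd * (α * R) ^ 2) := by
        rw [e1, mul_pow, e9]
    _ ≤ (R ^ ((2 : ℝ) - d)) ^ 2 * 9 ^ (d - 2 : ℕ) * (R ^ (d - 1 : ℕ) * (1 + cd * K)) *
        (cd * (2 * (α * R)) ^ 2) * (cd * (α * R) ^ 2) := by
        apply mul_le_mul_of_nonneg_right _ (by positivity)
        apply mul_le_mul_of_nonneg_right _ (by positivity)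
        apply mul_le_mul_of_nonneg_left hmid (by positivity)
    _ = (4 * cd ^ 2 * 9 ^ (d - 2 : ℕ) * (1 + cd * K)) * (α ^ 2 * α ^ 2) * Q := by
        rw [hQ]; ring
    _ ≤ (4 * cd ^ 2 * 9 ^ (d - 2 : ℕ) * (1 + cd * K)) * (α ^ 2 * α ^ 2) * 1 := by
        apply mul_le_mul_of_nonneg_left hQ1
        have h4 : (0 : ℝ) ≤ 4 * cd ^ 2 * 9 ^ (d - 2 : ℕ) := by positivity
        positivity
    _ ≤ (4 * cd ^ 2 * 9 ^ (d - 2 : ℕ) * (1 + cd * K)) * α ^ 2 := by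
        rw [mul_one]
        have h1 : α ^ 2 ≤ 1 := by nlinarith
        have hαsq : α ^ 2 * α ^ 2 ≤ α ^ 2 := by nlinarith [sq_nonneg α]
        apply mul_le_mul_of_nonneg_left hαsq
        positivity

theorem statement13 (d : ℕ) (hd : 6 < d) :
    ∃ C : ℝ, 0 < C ∧ ∀ α : ℝ, 0 < α → α < 1 / 3 → ∀ r : ℕ, 1 ≤ r →
      ∑' x : {x : Fin d → ℤ // ‖x‖ ≤ α * r},
      ∑' u : {u : Fin d → ℤ // ‖u‖ ≤ α * r},
      ∑' v : {v : Fin d → ℤ // ‖v‖ ≤ (r : ℝ)},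
        latPow (u.1 - x.1) ((2 : ℝ) - d) * latPow (x.1 - v.1) ((2 : ℝ) - d) *
          latPow (v.1 - u.1) ((2 : ℝ) - d) * latPow x.1 ((2 : ℝ) - d) *
          ENNReal.ofReal ((max ((r : ℝ) - ‖v.1‖) 1) ^ (-2 : ℝ)) ≤
        ENNReal.ofReal (C * α ^ 2) := by
  classical
  have hd0 : 0 < d := by omega
  have hd7 : (7 : ℝ) ≤ (d : ℝ) := by exact_mod_cast hd
  set S2 : ℝ≥0∞ := ∑' w : Fin d → ℤ, latPow w (((2 : ℝ) - d) * (3 / 2)) with hS2def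
  have hS2le : S2 ≤ (2 * d * 3 ^ (d - 1) : ℕ) * Kc32 :=
    tsum_all_le hd0 (by linarith)
  have hS2top : S2 ≠ ⊤ := by
    apply ne_top_of_le_ne_top _ hS2le
    exact ENNReal.mul_ne_top (ENNReal.natCast_ne_top _) Kc32_ne_top
  set S2r : ℝ := S2.toReal with hS2rdef
  have hS2eq : S2 = ENNReal.ofReal S2r := (ENNReal.ofReal_toReal hS2top).symm
  set K2r : ℝ := Kc2.toReal with hK2rdef
  have hK2eq : Kc2 = ENNReal.ofReal K2r := (ENNReal.ofReal_toReal Kc2_ne_top).symm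
  set cd : ℝ := ((2 * d * 3 ^ (d - 1) : ℕ) : ℝ) with hcddef
  have hcd0 : (0 : ℝ) ≤ cd := Nat.cast_nonneg _
  have hK2r0 : (0 : ℝ) ≤ K2r := ENNReal.toReal_nonneg
  have hS2r0 : (0 : ℝ) ≤ S2r := ENNReal.toReal_nonneg
  set C1 : ℝ := 27 * cd * S2r ^ 2 with hC1def
  set C2 : ℝ := 4 * cd ^ 2 * 9 ^ (d - 2) * (1 + cd * K2r) with hC2def
  have hC10 : 0 ≤ C1 := by positivity
  have hC20 : 0 ≤ C2 := by
    have h1 : (0 : ℝ) ≤ 1 + cd * K2r := by nlinarith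
    have h2 : (0 : ℝ) ≤ 4 * cd ^ 2 * 9 ^ (d - 2) := by positivity
    rw [hC2def]; exact mul_nonneg h2 h1
  refine ⟨C1 + C2 + 1, by linarith, ?_⟩
  intro α hα0 hα13 r hr
  have hR1 : (1 : ℝ) ≤ (r : ℝ) := by exact_mod_cast hr
  have hR0 : (0 : ℝ) < (r : ℝ) := by linarith
  have hα1 : α ≤ 1 := by linarith
  have hαR : (0 : ℝ) < α * r := by positivity
  have hαR3 : α * r ≤ (r : ℝ) / 3 := by nlinarith
  have hanp : (2 : ℝ) - d ≤ 0 := by linarith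
  -- reindexing
  have hreidx : ∀ z : Fin d → ℤ,
      (∑' w : Fin d → ℤ, latPow (w - z) (((2 : ℝ) - d) * (3 / 2))) = S2 := fun z =>
    (tsum_shift_sub (fun w => latPow w (((2 : ℝ) - d) * (3 / 2))) z)
  have hreidxl : ∀ z : Fin d → ℤ,
      (∑' w : Fin d → ℤ, latPow (z - w) (((2 : ℝ) - d) * (3 / 2))) = S2 := fun z =>
    (tsum_shift_subl (fun w => latPow w (((2 : ℝ) - d) * (3 / 2))) z)
  -- the double sum identity
  have hdouble : ∀ x : Fin d → ℤ,
      (∑' u : Fin d → ℤ, ∑' v : Fin d → ℤ,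
        (latPow (u - x) (((2 : ℝ) - d) * (3 / 2)) * latPow (x - v) (((2 : ℝ) - d) * (3 / 2)) +
         latPow (x - v) (((2 : ℝ) - d) * (3 / 2)) * latPow (v - u) (((2 : ℝ) - d) * (3 / 2)) +
         latPow (u - x) (((2 : ℝ) - d) * (3 / 2)) * latPow (v - u) (((2 : ℝ) - d) * (3 / 2))))
      = 3 * S2 ^ 2 := by
    intro x
    have hA : (∑' u : Fin d → ℤ, ∑' v : Fin d → ℤ,
        latPow (u - x) (((2 : ℝ) - d) * (3 / 2)) * latPow (x - v) (((2 : ℝ) - d) * (3 / 2)))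
        = S2 ^ 2 := by
      calc ∑' u : Fin d → ℤ, ∑' v : Fin d → ℤ,
            latPow (u - x) (((2 : ℝ) - d) * (3 / 2)) * latPow (x - v) (((2 : ℝ) - d) * (3 / 2))
          = ∑' u : Fin d → ℤ, latPow (u - x) (((2 : ℝ) - d) * (3 / 2)) *
              ∑' v : Fin d → ℤ, latPow (x - v) (((2 : ℝ) - d) * (3 / 2)) :=
            tsum_congr fun u => ENNReal.tsum_mul_left
        _ = ∑' u : Fin d → ℤ, latPow (u - x) (((2 : ℝ) - d) * (3 / 2)) * S2 :=
            tsum_congr fun u => by rw [hreidxl x]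
        _ = (∑' u : Fin d → ℤ, latPow (u - x) (((2 : ℝ) - d) * (3 / 2))) * S2 :=
            ENNReal.tsum_mul_right
        _ = S2 * S2 := by rw [hreidx x]
        _ = S2 ^ 2 := (sq S2).symm
    have hB : (∑' u : Fin d → ℤ, ∑' v : Fin d → ℤ,
        latPow (x - v) (((2 : ℝ) - d) * (3 / 2)) * latPow (v - u) (((2 : ℝ) - d) * (3 / 2)))
        = S2 ^ 2 := by
      rw [ENNReal.tsum_comm]
      calc ∑' v : Fin d → ℤ, ∑' u : Fin d → ℤ,
            latPow (x - v) (((2 : ℝ) - d) * (3 / 2)) * latPow (v - u) (((2 : ℝ) - d) * (3 / 2))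
          = ∑' v : Fin d → ℤ, latPow (x - v) (((2 : ℝ) - d) * (3 / 2)) *
              ∑' u : Fin d → ℤ, latPow (v - u) (((2 : ℝ) - d) * (3 / 2)) :=
            tsum_congr fun v => ENNReal.tsum_mul_left
        _ = ∑' v : Fin d → ℤ, latPow (x - v) (((2 : ℝ) - d) * (3 / 2)) * S2 :=
            tsum_congr fun v => by rw [hreidxl v]
        _ = (∑' v : Fin d → ℤ, latPow (x - v) (((2 : ℝ) - d) * (3 / 2))) * S2 :=
            ENNReal.tsum_mul_right
        _ = S2 * S2 := by rw [hreidxl x]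
        _ = S2 ^ 2 := (sq S2).symm
    have hC : (∑' u : Fin d → ℤ, ∑' v : Fin d → ℤ,
        latPow (u - x) (((2 : ℝ) - d) * (3 / 2)) * latPow (v - u) (((2 : ℝ) - d) * (3 / 2)))
        = S2 ^ 2 := by
      calc ∑' u : Fin d → ℤ, ∑' v : Fin d → ℤ,
            latPow (u - x) (((2 : ℝ) - d) * (3 / 2)) * latPow (v - u) (((2 : ℝ) - d) * (3 / 2))
          = ∑' u : Fin d → ℤ, latPow (u - x) (((2 : ℝ) - d) * (3 / 2)) *
              ∑' v : Fin d → ℤ, latPow (v - u) (((2 : ℝ) - d) * (3 / 2)) :=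
            tsum_congr fun u => ENNReal.tsum_mul_left
        _ = ∑' u : Fin d → ℤ, latPow (u - x) (((2 : ℝ) - d) * (3 / 2)) * S2 :=
            tsum_congr fun u => by rw [hreidx u]
        _ = (∑' u : Fin d → ℤ, latPow (u - x) (((2 : ℝ) - d) * (3 / 2))) * S2 :=
            ENNReal.tsum_mul_right
        _ = S2 * S2 := by rw [hreidx x]
        _ = S2 ^ 2 := (sq S2).symm
    calc (∑' u : Fin d → ℤ, ∑' v : Fin d → ℤ, _)
        = (∑' u : Fin d → ℤ, ((∑' v : Fin d → ℤ,
            latPow (u - x) (((2 : ℝ) - d) * (3 / 2)) * latPow (x - v) (((2 : ℝ) - d) * (3 / 2)))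
          + (∑' v : Fin d → ℤ,
            latPow (x - v) (((2 : ℝ) - d) * (3 / 2)) * latPow (v - u) (((2 : ℝ) - d) * (3 / 2)))
          + (∑' v : Fin d → ℤ,
            latPow (u - x) (((2 : ℝ) - d) * (3 / 2)) * latPow (v - u) (((2 : ℝ) - d) * (3 / 2))))) :=
          tsum_congr fun u => by rw [ENNReal.tsum_add, ENNReal.tsum_add]
      _ = S2 ^ 2 + S2 ^ 2 + S2 ^ 2 := by
          rw [ENNReal.tsum_add, ENNReal.tsum_add, hA, hB, hC]
      _ = 3 * S2 ^ 2 := by ring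
  -- bulk bound
  have hgle : ∀ v : Fin d → ℤ, ‖v‖ ≤ 2 * (r : ℝ) / 3 →
      ENNReal.ofReal ((max ((r : ℝ) - ‖v‖) 1) ^ (-2 : ℝ)) ≤
        ENNReal.ofReal (((r : ℝ) / 3) ^ (-2 : ℝ)) := by
    intro v hv
    apply ENNReal.ofReal_le_ofReal
    apply Real.rpow_le_rpow_of_nonpos (by linarith) _ (by norm_num)
    exact le_trans (by linarith) (le_max_left ((r : ℝ) - ‖v‖) 1)
  have hXsum : (∑' x : {x : Fin d → ℤ // ‖x‖ ≤ α * r}, latPow x.1 ((2 : ℝ) - d)) ≤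
      ENNReal.ofReal (cd * (α * r) ^ 2) := by
    calc (∑' x : {x : Fin d → ℤ // ‖x‖ ≤ α * r}, latPow x.1 ((2 : ℝ) - d))
        = ∑' x : {x : Fin d → ℤ // ‖x‖ ≤ α * r},
            (fun w => if ‖w‖ ≤ α * (r : ℝ) then latPow w ((2 : ℝ) - d) else 0) x.1 :=
          tsum_congr fun x => (if_pos x.2).symm
      _ ≤ ∑' w : Fin d → ℤ, (if ‖w‖ ≤ α * (r : ℝ) then latPow w ((2 : ℝ) - d) else 0) :=
          tsum_val_le _ _
      _ ≤ ENNReal.ofReal (cd * (α * r) ^ 2) := tsum_box_le hd0 hαR.le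
  have hMB : (∑' x : {x : Fin d → ℤ // ‖x‖ ≤ α * r},
      ∑' u : {u : Fin d → ℤ // ‖u‖ ≤ α * r},
      ∑' v : {v : Fin d → ℤ // ‖v‖ ≤ (r : ℝ)},
        if ‖v.1‖ ≤ 2 * (r : ℝ) / 3 then
          latPow (u.1 - x.1) ((2 : ℝ) - d) * latPow (x.1 - v.1) ((2 : ℝ) - d) *
            latPow (v.1 - u.1) ((2 : ℝ) - d) * latPow x.1 ((2 : ℝ) - d) *
            ENNReal.ofReal ((max ((r : ℝ) - ‖v.1‖) 1) ^ (-2 : ℝ)) else 0)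
      ≤ ENNReal.ofReal (C1 * α ^ 2) := by
    have hfac : ∀ x : Fin d → ℤ,
        (∑' u : Fin d → ℤ, ∑' v : Fin d → ℤ,
          ((latPow (u - x) (((2 : ℝ) - d) * (3 / 2)) * latPow (x - v) (((2 : ℝ) - d) * (3 / 2)) +
            latPow (x - v) (((2 : ℝ) - d) * (3 / 2)) * latPow (v - u) (((2 : ℝ) - d) * (3 / 2)) +
            latPow (u - x) (((2 : ℝ) - d) * (3 / 2)) * latPow (v - u) (((2 : ℝ) - d) * (3 / 2))) *
            latPow x ((2 : ℝ) - d) * ENNReal.ofReal (((r : ℝ) / 3) ^ (-2 : ℝ))))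
        = 3 * S2 ^ 2 * latPow x ((2 : ℝ) - d) * ENNReal.ofReal (((r : ℝ) / 3) ^ (-2 : ℝ)) := by
      intro x
      rw [tsum_congr (fun u => by rw [ENNReal.tsum_mul_right, ENNReal.tsum_mul_right]),
        ENNReal.tsum_mul_right, ENNReal.tsum_mul_right, hdouble x]
    calc (∑' x : {x : Fin d → ℤ // ‖x‖ ≤ α * r},
        ∑' u : {u : Fin d → ℤ // ‖u‖ ≤ α * r},
        ∑' v : {v : Fin d → ℤ // ‖v‖ ≤ (r : ℝ)},
          if ‖v.1‖ ≤ 2 * (r : ℝ) / 3 then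
            latPow (u.1 - x.1) ((2 : ℝ) - d) * latPow (x.1 - v.1) ((2 : ℝ) - d) *
              latPow (v.1 - u.1) ((2 : ℝ) - d) * latPow x.1 ((2 : ℝ) - d) *
              ENNReal.ofReal ((max ((r : ℝ) - ‖v.1‖) 1) ^ (-2 : ℝ)) else 0)
        ≤ ∑' x : {x : Fin d → ℤ // ‖x‖ ≤ α * r},
          ∑' u : {u : Fin d → ℤ // ‖u‖ ≤ α * r},
          ∑' v : {v : Fin d → ℤ // ‖v‖ ≤ (r : ℝ)},
            ((latPow (u.1 - x.1) (((2 : ℝ) - d) * (3 / 2)) *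
                latPow (x.1 - v.1) (((2 : ℝ) - d) * (3 / 2)) +
              latPow (x.1 - v.1) (((2 : ℝ) - d) * (3 / 2)) *
                latPow (v.1 - u.1) (((2 : ℝ) - d) * (3 / 2)) +
              latPow (u.1 - x.1) (((2 : ℝ) - d) * (3 / 2)) *
                latPow (v.1 - u.1) (((2 : ℝ) - d) * (3 / 2))) *
              latPow x.1 ((2 : ℝ) - d) * ENNReal.ofReal (((r : ℝ) / 3) ^ (-2 : ℝ))) := by
          apply ENNReal.tsum_le_tsum; intro x
          apply ENNReal.tsum_le_tsum; intro u
          apply ENNReal.tsum_le_tsum; intro v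
          by_cases hv : ‖v.1‖ ≤ 2 * (r : ℝ) / 3
          · rw [if_pos hv]
            exact mul_le_mul' (mul_le_mul' (latPow_triple _ _ _ _) le_rfl) (hgle v.1 hv)
          · rw [if_neg hv]; exact zero_le
      _ ≤ ∑' x : {x : Fin d → ℤ // ‖x‖ ≤ α * r},
          ∑' u : Fin d → ℤ, ∑' v : Fin d → ℤ,
            ((latPow (u - x.1) (((2 : ℝ) - d) * (3 / 2)) *
                latPow (x.1 - v) (((2 : ℝ) - d) * (3 / 2)) +
              latPow (x.1 - v) (((2 : ℝ) - d) * (3 / 2)) *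
                latPow (v - u) (((2 : ℝ) - d) * (3 / 2)) +
              latPow (u - x.1) (((2 : ℝ) - d) * (3 / 2)) *
                latPow (v - u) (((2 : ℝ) - d) * (3 / 2))) *
              latPow x.1 ((2 : ℝ) - d) * ENNReal.ofReal (((r : ℝ) / 3) ^ (-2 : ℝ))) := by
          apply ENNReal.tsum_le_tsum; intro x
          refine le_trans (ENNReal.tsum_le_tsum fun u => tsum_val_le _ _) (tsum_val_le _ _)
      _ = ∑' x : {x : Fin d → ℤ // ‖x‖ ≤ α * r},
            3 * S2 ^ 2 * latPow x.1 ((2 : ℝ) - d) *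
              ENNReal.ofReal (((r : ℝ) / 3) ^ (-2 : ℝ)) :=
          tsum_congr fun x => hfac x.1
      _ = (3 * S2 ^ 2 * ENNReal.ofReal (((r : ℝ) / 3) ^ (-2 : ℝ))) *
            ∑' x : {x : Fin d → ℤ // ‖x‖ ≤ α * r}, latPow x.1 ((2 : ℝ) - d) := by
          rw [← ENNReal.tsum_mul_left]
          exact tsum_congr fun x => by ring
      _ ≤ (3 * S2 ^ 2 * ENNReal.ofReal (((r : ℝ) / 3) ^ (-2 : ℝ))) *
            ENNReal.ofReal (cd * (α * r) ^ 2) := mul_le_mul_right hXsum _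
      _ = ENNReal.ofReal (C1 * α ^ 2) := by
          rw [hS2eq, ← ENNReal.ofReal_pow hS2r0,
            show (3 : ℝ≥0∞) = ENNReal.ofReal (3 : ℝ) by norm_num,
            ← ENNReal.ofReal_mul (by norm_num),
            ← ENNReal.ofReal_mul (by positivity),
            ← ENNReal.ofReal_mul (by positivity)]
          congr 1
          have hrp : ((r : ℝ) / 3) ^ (-2 : ℝ) = (((r : ℝ) / 3) ^ (2 : ℕ))⁻¹ := by
            rw [show (-2 : ℝ) = -(2 : ℝ) by norm_num, Real.rpow_neg (by positivity),
              show (2 : ℝ) = ((2 : ℕ) : ℝ) by norm_num, Real.rpow_natCast]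
          rw [hrp, hC1def]
          field_simp
          ring
  -- boundary bound
  have hGV : (∑' v : {v : Fin d → ℤ // ‖v‖ ≤ (r : ℝ)},
      ENNReal.ofReal ((max ((r : ℝ) - ‖v.1‖) 1) ^ (-2 : ℝ)))
      ≤ 1 + ((2 * d * 3 ^ (d - 1) * r ^ (d - 1) : ℕ) : ℝ≥0∞) * Kc2 := by
    calc (∑' v : {v : Fin d → ℤ // ‖v‖ ≤ (r : ℝ)},
        ENNReal.ofReal ((max ((r : ℝ) - ‖v.1‖) 1) ^ (-2 : ℝ)))
        = ∑' v : {v : Fin d → ℤ // ‖v‖ ≤ (r : ℝ)},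
            (fun w => if ‖w‖ ≤ (r : ℝ) then
              ENNReal.ofReal ((max ((r : ℝ) - ‖w‖) 1) ^ (-2 : ℝ)) else 0) v.1 :=
          tsum_congr fun v => (if_pos v.2).symm
      _ ≤ ∑' w : Fin d → ℤ, (if ‖w‖ ≤ (r : ℝ) then
            ENNReal.ofReal ((max ((r : ℝ) - ‖w‖) 1) ^ (-2 : ℝ)) else 0) := tsum_val_le _ _
      _ ≤ 1 + ((2 * d * 3 ^ (d - 1) * r ^ (d - 1) : ℕ) : ℝ≥0∞) * Kc2 := tsum_g_le hd0 r
  have hUsum : ∀ x : {x : Fin d → ℤ // ‖x‖ ≤ α * r},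
      (∑' u : {u : Fin d → ℤ // ‖u‖ ≤ α * r}, latPow (u.1 - x.1) ((2 : ℝ) - d)) ≤
        ENNReal.ofReal (cd * (2 * (α * r)) ^ 2) := by
    intro x
    calc (∑' u : {u : Fin d → ℤ // ‖u‖ ≤ α * r}, latPow (u.1 - x.1) ((2 : ℝ) - d))
        = ∑' u : {u : Fin d → ℤ // ‖u‖ ≤ α * r},
            (fun w => if ‖w‖ ≤ 2 * (α * (r : ℝ)) then latPow w ((2 : ℝ) - d) else 0)
              (u.1 - x.1) := by
          apply tsum_congr
          intro u
          have h1 := u.2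
          have h2 := x.2
          have hle : ‖u.1 - x.1‖ ≤ 2 * (α * (r : ℝ)) :=
            le_trans (norm_sub_le _ _) (by linarith)
          exact (if_pos hle).symm
      _ ≤ ∑' w : Fin d → ℤ,
            (if ‖w‖ ≤ 2 * (α * (r : ℝ)) then latPow w ((2 : ℝ) - d) else 0) :=
          ENNReal.tsum_comp_le_tsum_of_injective
            (f := fun u : {u : Fin d → ℤ // ‖u‖ ≤ α * r} => u.1 - x.1)
            (fun u u' h => Subtype.ext (by simpa using sub_left_injective h)) _
      _ ≤ ENNReal.ofReal (cd * (2 * (α * r)) ^ 2) := tsum_box_le hd0 (by positivity)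
  have hMD : (∑' x : {x : Fin d → ℤ // ‖x‖ ≤ α * r},
      ∑' u : {u : Fin d → ℤ // ‖u‖ ≤ α * r},
      ∑' v : {v : Fin d → ℤ // ‖v‖ ≤ (r : ℝ)},
        if ‖v.1‖ ≤ 2 * (r : ℝ) / 3 then 0 else
          latPow (u.1 - x.1) ((2 : ℝ) - d) * latPow (x.1 - v.1) ((2 : ℝ) - d) *
            latPow (v.1 - u.1) ((2 : ℝ) - d) * latPow x.1 ((2 : ℝ) - d) *
            ENNReal.ofReal ((max ((r : ℝ) - ‖v.1‖) 1) ^ (-2 : ℝ)))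
      ≤ ENNReal.ofReal (C2 * α ^ 2) := by
    calc (∑' x : {x : Fin d → ℤ // ‖x‖ ≤ α * r},
        ∑' u : {u : Fin d → ℤ // ‖u‖ ≤ α * r},
        ∑' v : {v : Fin d → ℤ // ‖v‖ ≤ (r : ℝ)},
          if ‖v.1‖ ≤ 2 * (r : ℝ) / 3 then 0 else
            latPow (u.1 - x.1) ((2 : ℝ) - d) * latPow (x.1 - v.1) ((2 : ℝ) - d) *
              latPow (v.1 - u.1) ((2 : ℝ) - d) * latPow x.1 ((2 : ℝ) - d) *
              ENNReal.ofReal ((max ((r : ℝ) - ‖v.1‖) 1) ^ (-2 : ℝ)))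
        ≤ ∑' x : {x : Fin d → ℤ // ‖x‖ ≤ α * r},
          ∑' u : {u : Fin d → ℤ // ‖u‖ ≤ α * r},
          ∑' v : {v : Fin d → ℤ // ‖v‖ ≤ (r : ℝ)},
            (latPow (u.1 - x.1) ((2 : ℝ) - d) * ENNReal.ofReal (((r : ℝ) / 3) ^ ((2 : ℝ) - d)) *
              ENNReal.ofReal (((r : ℝ) / 3) ^ ((2 : ℝ) - d)) * latPow x.1 ((2 : ℝ) - d) *
              ENNReal.ofReal ((max ((r : ℝ) - ‖v.1‖) 1) ^ (-2 : ℝ))) := by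
          apply ENNReal.tsum_le_tsum; intro x
          apply ENNReal.tsum_le_tsum; intro u
          apply ENNReal.tsum_le_tsum; intro v
          by_cases hv : ‖v.1‖ ≤ 2 * (r : ℝ) / 3
          · rw [if_pos hv]; exact zero_le
          · rw [if_neg hv]
            push_neg at hv
            have hx3 : ‖x.1‖ ≤ (r : ℝ) / 3 := le_trans x.2 hαR3
            have hu3 : ‖u.1‖ ≤ (r : ℝ) / 3 := le_trans u.2 hαR3
            have hxv : (r : ℝ) / 3 ≤ ‖x.1 - v.1‖ := by
              have h1 : ‖v.1‖ - ‖x.1‖ ≤ ‖v.1 - x.1‖ := norm_sub_norm_le _ _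
              rw [norm_sub_rev] at h1
              linarith
            have hvu : (r : ℝ) / 3 ≤ ‖v.1 - u.1‖ := by
              have h1 : ‖v.1‖ - ‖u.1‖ ≤ ‖v.1 - u.1‖ := norm_sub_norm_le _ _
              linarith
            exact mul_le_mul' (mul_le_mul' (mul_le_mul'
              (mul_le_mul' le_rfl (latPow_le_ofReal hanp (by linarith) hxv))
              (latPow_le_ofReal hanp (by linarith) hvu)) le_rfl) le_rfl
      _ = ∑' x : {x : Fin d → ℤ // ‖x‖ ≤ α * r},
          ∑' u : {u : Fin d → ℤ // ‖u‖ ≤ α * r},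
            ((latPow (u.1 - x.1) ((2 : ℝ) - d) * ENNReal.ofReal (((r : ℝ) / 3) ^ ((2 : ℝ) - d)) *
              ENNReal.ofReal (((r : ℝ) / 3) ^ ((2 : ℝ) - d)) * latPow x.1 ((2 : ℝ) - d)) *
              ∑' v : {v : Fin d → ℤ // ‖v‖ ≤ (r : ℝ)},
                ENNReal.ofReal ((max ((r : ℝ) - ‖v.1‖) 1) ^ (-2 : ℝ))) :=
          tsum_congr fun x => tsum_congr fun u => ENNReal.tsum_mul_left
      _ ≤ ∑' x : {x : Fin d → ℤ // ‖x‖ ≤ α * r},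
          ∑' u : {u : Fin d → ℤ // ‖u‖ ≤ α * r},
            ((latPow (u.1 - x.1) ((2 : ℝ) - d) * ENNReal.ofReal (((r : ℝ) / 3) ^ ((2 : ℝ) - d)) *
              ENNReal.ofReal (((r : ℝ) / 3) ^ ((2 : ℝ) - d)) * latPow x.1 ((2 : ℝ) - d)) *
              (1 + ((2 * d * 3 ^ (d - 1) * r ^ (d - 1) : ℕ) : ℝ≥0∞) * Kc2)) := by
          apply ENNReal.tsum_le_tsum; intro x
          apply ENNReal.tsum_le_tsum; intro u
          exact mul_le_mul_right hGV _
      _ = ∑' x : {x : Fin d → ℤ // ‖x‖ ≤ α * r},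
            ((ENNReal.ofReal (((r : ℝ) / 3) ^ ((2 : ℝ) - d)) *
              ENNReal.ofReal (((r : ℝ) / 3) ^ ((2 : ℝ) - d)) * latPow x.1 ((2 : ℝ) - d) *
              (1 + ((2 * d * 3 ^ (d - 1) * r ^ (d - 1) : ℕ) : ℝ≥0∞) * Kc2)) *
              ∑' u : {u : Fin d → ℤ // ‖u‖ ≤ α * r}, latPow (u.1 - x.1) ((2 : ℝ) - d)) := by
          apply tsum_congr; intro x
          rw [← ENNReal.tsum_mul_left]
          exact tsum_congr fun u => by ring
      _ ≤ ∑' x : {x : Fin d → ℤ // ‖x‖ ≤ α * r},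
            ((ENNReal.ofReal (((r : ℝ) / 3) ^ ((2 : ℝ) - d)) *
              ENNReal.ofReal (((r : ℝ) / 3) ^ ((2 : ℝ) - d)) * latPow x.1 ((2 : ℝ) - d) *
              (1 + ((2 * d * 3 ^ (d - 1) * r ^ (d - 1) : ℕ) : ℝ≥0∞) * Kc2)) *
              ENNReal.ofReal (cd * (2 * (α * r)) ^ 2)) := by
          apply ENNReal.tsum_le_tsum; intro x
          exact mul_le_mul_right (hUsum x) _
      _ = (ENNReal.ofReal (((r : ℝ) / 3) ^ ((2 : ℝ) - d)) *
            ENNReal.ofReal (((r : ℝ) / 3) ^ ((2 : ℝ) - d)) *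
            (1 + ((2 * d * 3 ^ (d - 1) * r ^ (d - 1) : ℕ) : ℝ≥0∞) * Kc2) *
            ENNReal.ofReal (cd * (2 * (α * r)) ^ 2)) *
            ∑' x : {x : Fin d → ℤ // ‖x‖ ≤ α * r}, latPow x.1 ((2 : ℝ) - d) := by
          rw [← ENNReal.tsum_mul_left]
          exact tsum_congr fun x => by ring
      _ ≤ (ENNReal.ofReal (((r : ℝ) / 3) ^ ((2 : ℝ) - d)) *
            ENNReal.ofReal (((r : ℝ) / 3) ^ ((2 : ℝ) - d)) *
            (1 + ((2 * d * 3 ^ (d - 1) * r ^ (d - 1) : ℕ) : ℝ≥0∞) * Kc2) *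
            ENNReal.ofReal (cd * (2 * (α * r)) ^ 2)) *
            ENNReal.ofReal (cd * (α * r) ^ 2) := mul_le_mul_right hXsum _
      _ ≤ ENNReal.ofReal (C2 * α ^ 2) := by
          have hq0 : (0 : ℝ) ≤ ((r : ℝ) / 3) ^ ((2 : ℝ) - d) :=
            Real.rpow_nonneg (by positivity) _
          have hGBn : (1 : ℝ≥0∞) + ((2 * d * 3 ^ (d - 1) * r ^ (d - 1) : ℕ) : ℝ≥0∞) * Kc2 =
              ENNReal.ofReal (1 + ((2 * d * 3 ^ (d - 1) * r ^ (d - 1) : ℕ) : ℝ) * K2r) := by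
            rw [hK2eq, show ((2 * d * 3 ^ (d - 1) * r ^ (d - 1) : ℕ) : ℝ≥0∞) =
                ENNReal.ofReal ((2 * d * 3 ^ (d - 1) * r ^ (d - 1) : ℕ) : ℝ) from
                (ENNReal.ofReal_natCast _).symm,
              ← ENNReal.ofReal_mul (Nat.cast_nonneg _), ← ENNReal.ofReal_one,
              ← ENNReal.ofReal_add (by norm_num) (by positivity)]
          rw [hGBn, ← ENNReal.ofReal_mul hq0, ← ENNReal.ofReal_mul (by positivity),
            ← ENNReal.ofReal_mul (by positivity), ← ENNReal.ofReal_mul (by positivity)]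
          apply ENNReal.ofReal_le_ofReal
          have hm : ((2 * d * 3 ^ (d - 1) * r ^ (d - 1) : ℕ) : ℝ) = cd * (r : ℝ) ^ (d - 1) := by
            rw [hcddef]; push_cast; ring
          calc ((r : ℝ) / 3) ^ ((2 : ℝ) - d) * ((r : ℝ) / 3) ^ ((2 : ℝ) - d) *
                (1 + ((2 * d * 3 ^ (d - 1) * r ^ (d - 1) : ℕ) : ℝ) * K2r) *
                (cd * (2 * (α * r)) ^ 2) * (cd * (α * r) ^ 2)
              = (((r : ℝ) / 3) ^ ((2 : ℝ) - d)) ^ 2 * (1 + cd * (r : ℝ) ^ (d - 1) * K2r) *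
                (cd * (2 * (α * (r : ℝ))) ^ 2) * (cd * (α * (r : ℝ)) ^ 2) := by
                rw [hm]; ring
            _ ≤ (4 * cd ^ 2 * 9 ^ (d - 2) * (1 + cd * K2r)) * α ^ 2 :=
                real_bdry d hd K2r cd hK2r0 hcd0 α (r : ℝ) hα0 hα1 hR1
            _ = C2 * α ^ 2 := by rw [hC2def]
  -- combine the two pieces
  calc (∑' x : {x : Fin d → ℤ // ‖x‖ ≤ α * r},
      ∑' u : {u : Fin d → ℤ // ‖u‖ ≤ α * r},
      ∑' v : {v : Fin d → ℤ // ‖v‖ ≤ (r : ℝ)},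
        latPow (u.1 - x.1) ((2 : ℝ) - d) * latPow (x.1 - v.1) ((2 : ℝ) - d) *
          latPow (v.1 - u.1) ((2 : ℝ) - d) * latPow x.1 ((2 : ℝ) - d) *
          ENNReal.ofReal ((max ((r : ℝ) - ‖v.1‖) 1) ^ (-2 : ℝ)))
      = ∑' x : {x : Fin d → ℤ // ‖x‖ ≤ α * r},
        ∑' u : {u : Fin d → ℤ // ‖u‖ ≤ α * r},
        ∑' v : {v : Fin d → ℤ // ‖v‖ ≤ (r : ℝ)},
          ((if ‖v.1‖ ≤ 2 * (r : ℝ) / 3 then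
            latPow (u.1 - x.1) ((2 : ℝ) - d) * latPow (x.1 - v.1) ((2 : ℝ) - d) *
              latPow (v.1 - u.1) ((2 : ℝ) - d) * latPow x.1 ((2 : ℝ) - d) *
              ENNReal.ofReal ((max ((r : ℝ) - ‖v.1‖) 1) ^ (-2 : ℝ)) else 0) +
          (if ‖v.1‖ ≤ 2 * (r : ℝ) / 3 then 0 else
            latPow (u.1 - x.1) ((2 : ℝ) - d) * latPow (x.1 - v.1) ((2 : ℝ) - d) *
              latPow (v.1 - u.1) ((2 : ℝ) - d) * latPow x.1 ((2 : ℝ) - d) *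
              ENNReal.ofReal ((max ((r : ℝ) - ‖v.1‖) 1) ^ (-2 : ℝ)))) :=
        tsum_congr fun x => tsum_congr fun u => tsum_congr fun v => by
          by_cases h : ‖v.1‖ ≤ 2 * (r : ℝ) / 3 <;> simp [h]
    _ = (∑' x : {x : Fin d → ℤ // ‖x‖ ≤ α * r},
        ∑' u : {u : Fin d → ℤ // ‖u‖ ≤ α * r},
        ∑' v : {v : Fin d → ℤ // ‖v‖ ≤ (r : ℝ)},
          (if ‖v.1‖ ≤ 2 * (r : ℝ) / 3 then
            latPow (u.1 - x.1) ((2 : ℝ) - d) * latPow (x.1 - v.1) ((2 : ℝ) - d) *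
              latPow (v.1 - u.1) ((2 : ℝ) - d) * latPow x.1 ((2 : ℝ) - d) *
              ENNReal.ofReal ((max ((r : ℝ) - ‖v.1‖) 1) ^ (-2 : ℝ)) else 0)) +
        (∑' x : {x : Fin d → ℤ // ‖x‖ ≤ α * r},
        ∑' u : {u : Fin d → ℤ // ‖u‖ ≤ α * r},
        ∑' v : {v : Fin d → ℤ // ‖v‖ ≤ (r : ℝ)},
          (if ‖v.1‖ ≤ 2 * (r : ℝ) / 3 then 0 else
            latPow (u.1 - x.1) ((2 : ℝ) - d) * latPow (x.1 - v.1) ((2 : ℝ) - d) *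
              latPow (v.1 - u.1) ((2 : ℝ) - d) * latPow x.1 ((2 : ℝ) - d) *
              ENNReal.ofReal ((max ((r : ℝ) - ‖v.1‖) 1) ^ (-2 : ℝ)))) := by
        rw [← ENNReal.tsum_add]
        apply tsum_congr; intro x
        rw [← ENNReal.tsum_add]
        apply tsum_congr; intro u
        rw [← ENNReal.tsum_add]
    _ ≤ ENNReal.ofReal (C1 * α ^ 2) + ENNReal.ofReal (C2 * α ^ 2) := add_le_add hMB hMD
    _ = ENNReal.ofReal (C1 * α ^ 2 + C2 * α ^ 2) :=
        (ENNReal.ofReal_add (mul_nonneg hC10 (sq_nonneg α)) (mul_nonneg hC20 (sq_nonneg α))).symm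
    _ ≤ ENNReal.ofReal ((C1 + C2 + 1) * α ^ 2) :=
        ENNReal.ofReal_le_ofReal (by nlinarith [sq_nonneg α])
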